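/- Let P and Q be projections on a complex Hilbert space H with P nontrivial, and suppose inf_{μ∈ℝ} ‖P − Q − μI‖ < 1/2. Then ‖P − Q‖ < 1, and consequently P and Q are unitarily equivalent. -/

import Mathlib

section RingLemmas
variable {A : Type*} [Ring A] {P Q : A}

lemma aux_expand1 (hP2 : P*P = P) (hQ2 : Q*Q = Q) :
    (P*Q + (1-P)*(1-Q)) * (Q*P + (1-Q)*(1-P)) = 1 - (P-Q)*(P-Q) := by
  have hp : ∀ x, P * (P * x) = P * x := fun x => by rw [← mul_assoc, hP2]
  have hq : ∀ x, Q * (Q * x) = Q * x := fun x => by rw [← mul_assoc, hQ2]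
  simp only [mul_sub, sub_mul, mul_add, add_mul, mul_one, one_mul, mul_assoc, hP2, hQ2, hp, hq]
  abel

lemma aux_expand2 (hP2 : P*P = P) (hQ2 : Q*Q = Q) :
    (Q*P + (1-Q)*(1-P)) * (P*Q + (1-P)*(1-Q)) = 1 - (P-Q)*(P-Q) := by
  have := aux_expand1 hQ2 hP2
  rw [this, show Q - P = -(P-Q) by abel, neg_mul_neg]

lemma aux_intertwine (hP2 : P*P = P) (hQ2 : Q*Q = Q) :
    (Q*P + (1-Q)*(1-P)) * P = Q * (Q*P + (1-Q)*(1-P)) := by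
  have hp : ∀ x, P * (P * x) = P * x := fun x => by rw [← mul_assoc, hP2]
  have hq : ∀ x, Q * (Q * x) = Q * x := fun x => by rw [← mul_assoc, hQ2]
  simp only [mul_sub, sub_mul, mul_add, add_mul, mul_one, one_mul, mul_assoc, hP2, hQ2, hp, hq]
  abel

lemma aux_commS (hP2 : P*P = P) (hQ2 : Q*Q = Q) :
    P * (1 - (P-Q)*(P-Q)) = (1 - (P-Q)*(P-Q)) * P := by
  have hp : ∀ x, P * (P * x) = P * x := fun x => by rw [← mul_assoc, hP2]
  simp only [mul_sub, sub_mul, mul_add, add_mul, mul_one, one_mul, mul_assoc, hP2, hQ2, hp]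
  abel

lemma aux_Wsq (hP2 : P*P = P) : (P + P - 1) * (P + P - 1) = 1 := by
  simp only [mul_sub, sub_mul, mul_add, add_mul, mul_one, one_mul, hP2]
  abel

lemma aux_isUnit_of_left_right {a b c : A} (hab : a * b = 1) (hca : c * a = 1) : IsUnit a :=
  ⟨⟨a, b, hab, by
    have hbc : b = c := by rw [← one_mul b, ← hca, mul_assoc, hab, mul_one]
    rw [hbc]; exact hca⟩, rfl⟩
end RingLemmas

set_option maxHeartbeats 1000000 in
set_option synthInstance.maxHeartbeats 400000 in
lemma aux_unitary_equiv {H : Type*} [NormedAddCommGroup H] [InnerProductSpace ℂ H]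
    [CompleteSpace H] (P Q : H →L[ℂ] H) (hP : IsSelfAdjoint P) (hP2 : IsIdempotentElem P)
    (hQ : IsSelfAdjoint Q) (hQ2 : IsIdempotentElem Q) (hnorm : ‖P - Q‖ < 1) :
    ∃ U ∈ unitary (H →L[ℂ] H), Q = U * P * star U := by
  set S : H →L[ℂ] H := 1 - (P-Q)*(P-Q) with hS_def
  set V : H →L[ℂ] H := Q*P + (1-Q)*(1-P) with hV_def
  have hVstar : star V = P*Q + (1-P)*(1-Q) := by
    simp [hV_def, star_sub, star_mul, star_add, hP.star_eq, hQ.star_eq]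
  have hVsV : star V * V = S := by rw [hVstar]; exact aux_expand1 hP2.eq hQ2.eq
  have hVVs : V * star V = S := by rw [hVstar]; exact aux_expand2 hP2.eq hQ2.eq
  have hVP : V * P = Q * V := aux_intertwine hP2.eq hQ2.eq
  have hPS : P * S = S * P := aux_commS hP2.eq hQ2.eq
  have hS0 : (0 : H →L[ℂ] H) ≤ S := hVsV ▸ star_mul_self_nonneg V
  have hn2 : ‖(P-Q)*(P-Q)‖ < 1 := by
    refine lt_of_le_of_lt (norm_mul_le _ _) ?_
    have h0 : (0:ℝ) ≤ ‖P - Q‖ := norm_nonneg _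
    simpa using mul_lt_mul'' hnorm hnorm h0 h0
  have hSU : IsUnit S := (Units.oneSub _ hn2).isUnit
  set T : H →L[ℂ] H := CFC.sqrt S with hT_def
  have hT0 : (0 : H →L[ℂ] H) ≤ T := CFC.sqrt_nonneg S
  have hTT : T * T = S := CFC.sqrt_mul_sqrt_self S hS0
  have hTsa : star T = T := (IsSelfAdjoint.of_nonneg hT0).star_eq
  -- W := 2P - 1
  set W : H →L[ℂ] H := P + P - 1 with hW_def
  have hWsa : star W = W := by simp [hW_def, star_sub, star_add, hP.star_eq]
  have hWW : W * W = 1 := aux_Wsq hP2.eq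
  have hWS : W * S = S * W := by
    simp only [hW_def, add_mul, sub_mul, mul_add, mul_sub, one_mul, mul_one, hPS]
  have hWTW0 : (0 : H →L[ℂ] H) ≤ W * T * W := by
    have := star_left_conjugate_nonneg hT0 W
    rwa [hWsa] at this
  have hWTW : W * T * W = T := by
    have hsq : (W * T * W) * (W * T * W) = S := by
      calc (W * T * W) * (W * T * W) = W * (T * (W * (W * (T * W)))) := by
            simp only [mul_assoc]
        _ = W * (T * (T * W)) := by
            rw [show W * (W * (T * W)) = T * W from by rw [← mul_assoc, hWW, one_mul]]
        _ = W * (S * W) := by rw [show T * (T * W) = S * W from by rw [← mul_assoc, hTT]]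
        _ = (S * W) * W := by rw [← mul_assoc, hWS]
        _ = S * (W * W) := by simp only [mul_assoc]
        _ = S := by rw [hWW, mul_one]
    have h := CFC.sqrt_unique hsq hWTW0
    rw [← hT_def] at h
    exact h.symm
  have hWT : W * T = T * W := by
    have h1 : W * T * (W * W) = T * W := by rw [← mul_assoc (W*T) W W, hWTW]
    rwa [hWW, mul_one] at h1
  have hPT : P * T = T * P := by
    have h2 : P * T + P * T - T = T * P + T * P - T := by
      have h := hWT
      simp only [hW_def, add_mul, sub_mul, mul_add, mul_sub, one_mul, mul_one] at h
      convert h using 1 <;> abel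
    have h3 : (2:ℝ) • (P * T) = (2:ℝ) • (T * P) := by
      rw [two_smul, two_smul]
      exact sub_left_inj.mp h2
    exact smul_right_injective _ (two_ne_zero) h3
  -- T is a unit, R its inverse
  have hTU : IsUnit T := by
    refine aux_isUnit_of_left_right (b := T * ↑hSU.unit⁻¹) (c := ↑hSU.unit⁻¹ * T) ?_ ?_
    · calc T * (T * ↑hSU.unit⁻¹) = (T * T) * ↑hSU.unit⁻¹ := by rw [mul_assoc]
        _ = 1 := by rw [hTT]; exact hSU.mul_val_inv
    · calc (↑hSU.unit⁻¹ * T) * T = ↑hSU.unit⁻¹ * (T * T) := by rw [mul_assoc]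
        _ = 1 := by rw [hTT]; exact hSU.val_inv_mul
  set R : H →L[ℂ] H := ↑hTU.unit⁻¹ with hR_def
  have hTR : T * R = 1 := hTU.mul_val_inv
  have hRT : R * T = 1 := hTU.val_inv_mul
  have hRT' : ∀ x, R * (T * x) = x := fun x => by rw [← mul_assoc, hRT, one_mul]
  have hTR' : ∀ x, T * (R * x) = x := fun x => by rw [← mul_assoc, hTR, one_mul]
  have hRsa : star R = R := by
    have h1 : star R * T = 1 := by
      have := congrArg star hTR
      rwa [star_mul, hTsa, star_one] at this
    calc star R = star R * (T * R) := by rw [hTR, mul_one]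
      _ = (star R * T) * R := by rw [mul_assoc]
      _ = R := by rw [h1, one_mul]
  have hPR : P * R = R * P := by
    have hc : Commute P (hTU.unit : H →L[ℂ] H) := by
      have : (hTU.unit : H →L[ℂ] H) = T := hTU.unit_spec
      rw [this]; exact hPT
    exact hc.units_inv_right
  have hPR' : ∀ x, P * (R * x) = R * (P * x) := fun x => by
    rw [← mul_assoc, hPR, mul_assoc]
  -- S⁻¹ = R * R and V commutes with it
  have hSRR : S * (R * R) = 1 := by
    calc S * (R * R) = T * (T * (R * R)) := by rw [← hTT, mul_assoc]
      _ = T * R := by rw [hTR']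
      _ = 1 := hTR
  have hSinv : (↑hSU.unit⁻¹ : H →L[ℂ] H) = R * R := by
    refine Units.inv_eq_of_mul_eq_one_right ?_
    rw [hSU.unit_spec]; exact hSRR
  have hVS : V * S = S * V := by
    calc V * S = V * (star V * V) := by rw [hVsV]
      _ = (V * star V) * V := by rw [mul_assoc]
      _ = S * V := by rw [hVVs]
  have hVRR : V * (R * R) = (R * R) * V := by
    have hc : Commute V (hSU.unit : H →L[ℂ] H) := by
      have : (hSU.unit : H →L[ℂ] H) = S := hSU.unit_spec
      rw [this]; exact hVS
    have := hc.units_inv_right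
    rwa [hSinv] at this
  have hVRR' : ∀ x, V * (R * (R * x)) = R * (R * (V * x)) := fun x => by
    calc V * (R * (R * x)) = (V * (R * R)) * x := by simp only [mul_assoc]
      _ = ((R * R) * V) * x := by rw [hVRR]
      _ = R * (R * (V * x)) := by simp only [mul_assoc]
  have hVsV' : ∀ x, star V * (V * x) = S * x := fun x => by
    rw [← mul_assoc, hVsV]
  have hVVs' : ∀ x, V * (star V * x) = S * x := fun x => by
    rw [← mul_assoc, hVVs]
  have hVP' : ∀ x, V * (P * x) = Q * (V * x) := fun x => by
    rw [← mul_assoc, hVP, mul_assoc]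
  have key : V * (R * (R * star V)) = 1 := by
    calc V * (R * (R * star V)) = R * (R * (V * star V)) := hVRR' (star V)
      _ = R * (R * S) := by rw [hVVs]
      _ = R * (R * (T * T)) := by rw [← hTT]
      _ = R * T := by rw [hRT']
      _ = 1 := hRT
  refine ⟨V * R, ?_, ?_⟩
  · rw [Unitary.mem_iff]
    constructor
    · rw [star_mul, hRsa]
      calc R * star V * (V * R) = R * (star V * (V * R)) := by simp only [mul_assoc]
        _ = R * (S * R) := by rw [hVsV']
        _ = R * (T * (T * R)) := by rw [← hTT, mul_assoc]
        _ = T * R := by rw [hRT']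
        _ = 1 := hTR
    · rw [star_mul, hRsa]
      calc V * R * (R * star V) = V * (R * (R * star V)) := by simp only [mul_assoc]
        _ = 1 := key
  · rw [star_mul, hRsa]
    calc Q = Q * (V * (R * (R * star V))) := by rw [key, mul_one]
      _ = V * (P * (R * (R * star V))) := by rw [hVP']
      _ = V * (R * (P * (R * star V))) := by rw [hPR']
      _ = V * R * P * (R * star V) := by simp only [mul_assoc]


open scoped InnerProductSpace ComplexConjugate

set_option maxHeartbeats 1000000 in
theorem aux_norm_lt_one {H : Type*} [NormedAddCommGroup H] [InnerProductSpace ℂ H] [CompleteSpace H]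
    (P Q : H →L[ℂ] H) (hP : IsSelfAdjoint P) (hP2 : IsIdempotentElem P)
    (hQ : IsSelfAdjoint Q) (hQ2 : IsIdempotentElem Q)
    (hP0 : P ≠ 0) (hP1 : P ≠ 1)
    (h : (⨅ μ : ℝ, ‖P - Q - μ • (1 : H →L[ℂ] H)‖) < 1 / 2) :
    ‖P - Q‖ < 1 := by
  obtain ⟨μ, hμ⟩ := exists_lt_of_ciInf_lt h
  set D : H →L[ℂ] H := P - Q - μ • 1 with hD_def
  -- unit vector prep
  have hPP : ∀ v, P (P v) = P v := fun v => by
    rw [← ContinuousLinearMap.mul_apply, hP2.eq]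
  have hQQ : ∀ v, Q (Q v) = Q v := fun v => by
    rw [← ContinuousLinearMap.mul_apply, hQ2.eq]
  have hQadj : ContinuousLinearMap.adjoint Q = Q := by
    rw [← ContinuousLinearMap.star_eq_adjoint, hQ.star_eq]
  -- D w = P w - Q w - μ • w
  have hDapp : ∀ w : H, D w = P w - Q w - (μ : ℝ) • w := fun w => by
    simp [hD_def]
  -- |re ⟪D w, w⟫| ≤ ‖D‖ for unit w
  have hDbound : ∀ w : H, ‖w‖ = 1 → |(⟪D w, w⟫_ℂ).re| ≤ ‖D‖ := by
    intro w hw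
    calc |(⟪D w, w⟫_ℂ).re| ≤ ‖⟪D w, w⟫_ℂ‖ := Complex.abs_re_le_norm _
      _ = ‖⟪D w, w⟫_ℂ‖ := rfl
      _ ≤ ‖D w‖ * ‖w‖ := norm_inner_le_norm _ _
      _ ≤ (‖D‖ * ‖w‖) * ‖w‖ := by
          have := D.le_opNorm w
          nlinarith [norm_nonneg w]
      _ = ‖D‖ := by rw [hw]; ring
  -- re ⟪Q w, w⟫ ∈ [0, 1] for unit w
  have hQrange : ∀ w : H, ‖w‖ = 1 → (⟪Q w, w⟫_ℂ).re = ‖Q w‖^2 ∧ ‖Q w‖ ≤ 1 := by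
    intro w hw
    have key : ⟪Q w, w⟫_ℂ = ⟪Q w, Q w⟫_ℂ := by
      conv_lhs => rw [← hQQ w]
      rw [← ContinuousLinearMap.adjoint_inner_right Q (Q w) w, hQadj]
    have h1 : (⟪Q w, w⟫_ℂ).re = ‖Q w‖^2 := by
      rw [key]; exact_mod_cast inner_self_eq_norm_sq (𝕜 := ℂ) (Q w)
    refine ⟨h1, ?_⟩
    have h2 : ‖Q w‖^2 ≤ ‖Q w‖ := by
      rw [← h1]
      calc (⟪Q w, w⟫_ℂ).re ≤ ‖⟪Q w, w⟫_ℂ‖ := Complex.re_le_norm _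
        _ ≤ ‖Q w‖ * ‖w‖ := norm_inner_le_norm _ _
        _ = ‖Q w‖ := by rw [hw, mul_one]
    nlinarith [norm_nonneg (Q w)]
  -- expansion of re ⟪D w, w⟫
  have hDre : ∀ w : H, ‖w‖ = 1 →
      (⟪D w, w⟫_ℂ).re = (⟪P w, w⟫_ℂ).re - (⟪Q w, w⟫_ℂ).re - μ := by
    intro w hw
    rw [hDapp w]
    rw [inner_sub_left, inner_sub_left]
    have : ⟪(μ : ℝ) • w, w⟫_ℂ = (μ : ℝ) • ⟪w, w⟫_ℂ := inner_smul_real_left _ _ _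
    rw [this]
    have hww : ⟪w, w⟫_ℂ = (1 : ℂ) := by
      rw [inner_self_eq_norm_sq_to_K, hw]; norm_num
    simp [hww, hw]
  -- vector in range of P
  obtain ⟨x, hx⟩ : ∃ x, P x ≠ 0 := by
    by_contra hc
    push_neg at hc
    exact hP0 (by ext w; simpa using hc w)
  haveI : Nontrivial H := ⟨⟨x, 0, fun h0 => hx (by rw [h0, map_zero])⟩⟩
  set y : H := ‖P x‖⁻¹ • P x with hy_def
  have hy1 : ‖y‖ = 1 := by
    rw [hy_def, norm_smul, norm_inv, norm_norm]
    exact inv_mul_cancel₀ (norm_ne_zero_iff.2 hx)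
  have hPy : P y = y := by rw [hy_def, P.map_smul_of_tower, hPP]
  -- vector in kernel of P
  obtain ⟨v, hv⟩ : ∃ v, P v ≠ v := by
    by_contra hc
    push_neg at hc
    exact hP1 (by ext w; simpa using hc w)
  set z0 : H := v - P v with hz0_def
  have hz0 : z0 ≠ 0 := sub_ne_zero.2 (Ne.symm hv)
  have hPz0 : P z0 = 0 := by rw [hz0_def, map_sub, hPP, sub_self]
  set z : H := ‖z0‖⁻¹ • z0 with hz_def
  have hz1 : ‖z‖ = 1 := by
    rw [hz_def, norm_smul, norm_inv, norm_norm]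
    exact inv_mul_cancel₀ (norm_ne_zero_iff.2 hz0)
  have hPz : P z = 0 := by rw [hz_def, P.map_smul_of_tower, hPz0, smul_zero]
  -- inequality at y : |1 - q1 - μ| ≤ ‖D‖ < 1/2
  have hPyinner : (⟪P y, y⟫_ℂ).re = 1 := by
    rw [hPy, inner_self_eq_norm_sq_to_K, hy1]; norm_num
  have hPzinner : (⟪P z, z⟫_ℂ).re = 0 := by rw [hPz, inner_zero_left]; rfl
  obtain ⟨hq1, hq1b⟩ := hQrange y hy1
  obtain ⟨hq0, hq0b⟩ := hQrange z hz1
  have hy_est : |1 - ‖Q y‖^2 - μ| < 1/2 := by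
    have := hDbound y hy1
    rw [hDre y hy1, hPyinner, hq1] at this
    linarith
  have hz_est : |0 - ‖Q z‖^2 - μ| < 1/2 := by
    have := hDbound z hz1
    rw [hDre z hz1, hPzinner, hq0] at this
    linarith
  -- conclude |μ| < 1/2
  have hμabs : |μ| < 1/2 := by
    rw [abs_lt] at hy_est hz_est ⊢
    constructor <;> nlinarith [sq_nonneg ‖Q y‖, sq_nonneg ‖Q z‖, hq1b, hq0b,
      norm_nonneg (Q y), norm_nonneg (Q z)]
  -- conclude
  have : ‖P - Q‖ ≤ ‖D‖ + |μ| := by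
    have : P - Q = D + μ • 1 := by rw [hD_def]; abel
    rw [this]
    refine le_trans (norm_add_le _ _) ?_
    have : ‖(μ : ℝ) • (1 : H →L[ℂ] H)‖ = |μ| := by
      rw [norm_smul, norm_one, mul_one]; rfl
    rw [this]
  linarith


variable {H : Type*} [NormedAddCommGroup H] [InnerProductSpace ℂ H] [CompleteSpace H]

theorem projections_unitarily_equivalent_of_factor_dist_lt_half
    (P Q : H →L[ℂ] H) (hP : IsSelfAdjoint P) (hP2 : IsIdempotentElem P)
    (hQ : IsSelfAdjoint Q) (hQ2 : IsIdempotentElem Q)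
    (hP0 : P ≠ 0) (hP1 : P ≠ 1)
    (h : (⨅ μ : ℝ, ‖P - Q - μ • (1 : H →L[ℂ] H)‖) < 1 / 2) :
    ‖P - Q‖ < 1 ∧ ∃ U ∈ unitary (H →L[ℂ] H), Q = U * P * star U := by
  have h1 : ‖P - Q‖ < 1 := aux_norm_lt_one P Q hP hP2 hQ hQ2 hP0 hP1 h
  exact ⟨h1, aux_unitary_equiv P Q hP hP2 hQ hQ2 h1⟩
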